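/- Under conditions (P1)–(P4), and assuming SOL(K, w + G(·), φ) is nonempty for every w ∈ Ω₁*, for every θ ∈ C([0,T],Ω₂) there exists a strongly measurable function l : [0,T] → Ω₁ such that l(ξ) ∈ U(ξ,θ(ξ)) for a.e. ξ ∈ [0,T]; moreover any such l is essentially bounded, hence belongs to L²([0,T],Ω₁), so the set P_U(θ) is nonempty. -/

import Mathlib

open MeasureTheory Set Filter Topology
open scoped ENNReal

noncomputable section

/-- `SOL K G φ w` is the solution set `SOL(K, w + G(·), φ)` of the generalized mixed
variational inequality: all `u ∈ K` with `⟨w + G(u), v - u⟩ + φ(v) - φ(u) ≥ 0` for all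
`v ∈ K` (written without `EReal` subtraction as `φ(u) ≤ ⟨w + G(u), v - u⟩ + φ(v)`). -/
def SOL {Ω₁ : Type*} [NormedAddCommGroup Ω₁] [NormedSpace ℝ Ω₁]
    (K : Set Ω₁) (G : Ω₁ → (Ω₁ →L[ℝ] ℝ)) (φ : Ω₁ → EReal) (w : Ω₁ →L[ℝ] ℝ) : Set Ω₁ :=
  {u | u ∈ K ∧ ∀ v ∈ K, φ u ≤ ((w (v - u) + (G u) (v - u) : ℝ) : EReal) + φ v}

/-- (P1): `G` is monotone on `K` and hemicontinuous on `K`. -/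
def condP1 {Ω₁ : Type*} [NormedAddCommGroup Ω₁] [NormedSpace ℝ Ω₁]
    (K : Set Ω₁) (G : Ω₁ → (Ω₁ →L[ℝ] ℝ)) : Prop :=
  (∀ u ∈ K, ∀ v ∈ K, 0 ≤ (G v - G u) (v - u)) ∧
  (∀ u ∈ K, ∀ v ∈ K, ∀ x : Ω₁,
    ContinuousOn (fun t : ℝ => (G (u + t • (v - u))) x) (Icc (0:ℝ) 1))

/-- (P2): `φ : Ω₁ → ℝ ∪ {+∞}` (an `EReal`-valued map never taking the value `⊥`) is
proper, convex and lower semicontinuous. -/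
def condP2 {Ω₁ : Type*} [NormedAddCommGroup Ω₁] [NormedSpace ℝ Ω₁] (φ : Ω₁ → EReal) : Prop :=
  (∀ u, φ u ≠ ⊥) ∧ (∃ u, φ u ≠ ⊤) ∧
  (∀ u v : Ω₁, ∀ t : ℝ, t ∈ Icc (0:ℝ) 1 →
    φ (t • u + (1 - t) • v) ≤ (t : EReal) * φ u + ((1 - t : ℝ) : EReal) * φ v) ∧
  LowerSemicontinuous φ

/-- (P3): coercivity: there is `v* ∈ K ∩ D(φ)` with
`(⟨G(u), u - v*⟩ + φ(u) - φ(v*))/‖u‖ → +∞` as `‖u‖ → ∞`, `u ∈ K`. -/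
def condP3 {Ω₁ : Type*} [NormedAddCommGroup Ω₁] [NormedSpace ℝ Ω₁]
    (K : Set Ω₁) (G : Ω₁ → (Ω₁ →L[ℝ] ℝ)) (φ : Ω₁ → EReal) : Prop :=
  ∃ vs ∈ K, φ vs ≠ ⊤ ∧
    ∀ M : ℝ, ∃ R : ℝ, ∀ u ∈ K, R ≤ ‖u‖ →
      ((M * ‖u‖ : ℝ) : EReal) + φ vs ≤ (((G u) (u - vs) : ℝ) : EReal) + φ u

/-- (P4): `g` is continuous and bounded on `[0,T] × Ω₂`. -/
def condP4 {Ω₁ Ω₂ : Type*} [NormedAddCommGroup Ω₁] [NormedSpace ℝ Ω₁]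
    [NormedAddCommGroup Ω₂] [NormedSpace ℝ Ω₂]
    (T : ℝ) (g : ℝ → Ω₂ → (Ω₁ →L[ℝ] ℝ)) : Prop :=
  ContinuousOn (fun p : ℝ × Ω₂ => g p.1 p.2) (Icc (0:ℝ) T ×ˢ univ) ∧
  ∃ C : ℝ, ∀ ξ ∈ Icc (0:ℝ) T, ∀ θ : Ω₂, ‖g ξ θ‖ ≤ C

/-- Extension of `θ ∈ C([0,T], Ω₂)` to all of `ℝ` by projecting onto `[0,T]`
(only its values on `[0,T]` are ever used). -/
def extIcc {Ω₂ : Type*} [TopologicalSpace Ω₂] {T : ℝ} (hT : (0:ℝ) ≤ T)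
    (θ : C(Icc (0:ℝ) T, Ω₂)) (s : ℝ) : Ω₂ :=
  θ (Set.projIcc 0 T hT s)

/-- `P_U(θ)`: the set of `L²` selections of `ξ ↦ U(ξ, θ(ξ))`. -/
def PUset {Ω₁ Ω₂ : Type*} [NormedAddCommGroup Ω₁] [NormedSpace ℝ Ω₁]
    [NormedAddCommGroup Ω₂] [NormedSpace ℝ Ω₂]
    (K : Set Ω₁) (G : Ω₁ → (Ω₁ →L[ℝ] ℝ)) (φ : Ω₁ → EReal)
    {T : ℝ} (hT : (0:ℝ) ≤ T) (g : ℝ → Ω₂ → (Ω₁ →L[ℝ] ℝ))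
    (θ : C(Icc (0:ℝ) T, Ω₂)) : Set (ℝ → Ω₁) :=
  {l | MemLp l 2 (volume.restrict (Icc (0:ℝ) T)) ∧
    ∀ᵐ ξ ∂(volume.restrict (Icc (0:ℝ) T)), l ξ ∈ SOL K G φ (g ξ (extIcc hT θ ξ))}

section Aux

variable {Ω₁ : Type*} [NormedAddCommGroup Ω₁] [NormedSpace ℝ Ω₁]
variable {K : Set Ω₁} {G : Ω₁ → (Ω₁ →L[ℝ] ℝ)} {φ : Ω₁ → EReal}

/-- helper : EReal `a ≤ s + ε` for all `ε > 0` implies `a ≤ s`. -/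
lemma ereal_le_of_forall_eps {a : EReal} {s : ℝ}
    (h : ∀ ε : ℝ, 0 < ε → a ≤ ((s + ε : ℝ) : EReal)) : a ≤ (s : EReal) := by
  by_contra hlt
  rw [not_le] at hlt
  obtain ⟨c, hc1, hc2⟩ := EReal.exists_between_coe_real hlt
  have h' := h (c - s) (by exact_mod_cast sub_pos.mpr (EReal.coe_lt_coe_iff.mp hc1))
  have : (↑(s + (c - s)) : EReal) = (c : EReal) := by norm_num
  rw [this] at h'
  exact absurd (h'.trans_lt hc2) (lt_irrefl _)

/-- Minty, forward direction. -/
lemma minty_fwd (hmono : ∀ u ∈ K, ∀ v ∈ K, 0 ≤ (G v - G u) (v - u))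
    {w : Ω₁ →L[ℝ] ℝ} {u : Ω₁} (hu : u ∈ SOL K G φ w) :
    ∀ v ∈ K, φ u ≤ ((w (v - u) + (G v) (v - u) : ℝ) : EReal) + φ v := by
  intro v hv
  obtain ⟨huK, hineq⟩ := hu
  refine (hineq v hv).trans ?_
  have h0 : (0:ℝ) ≤ (G v) (v - u) - (G u) (v - u) := by
    have := hmono u huK v hv
    simpa [ContinuousLinearMap.sub_apply] using this
  have : (w (v - u) + (G u) (v - u) : ℝ) ≤ (w (v - u) + (G v) (v - u) : ℝ) := by linarith
  exact add_le_add_left (EReal.coe_le_coe_iff.mpr this) _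

/-- Minty, backward direction. -/
lemma minty_bwd (hP1 : condP1 K G) (hP2 : condP2 φ) (hKcv : Convex ℝ K)
    {vs : Ω₁} (hvsK : vs ∈ K) (hvs : φ vs ≠ ⊤)
    {w : Ω₁ →L[ℝ] ℝ} {u : Ω₁} (huK : u ∈ K)
    (h : ∀ v ∈ K, φ u ≤ ((w (v - u) + (G v) (v - u) : ℝ) : EReal) + φ v) :
    u ∈ SOL K G φ w := by
  obtain ⟨b, hb⟩ : ∃ b : ℝ, φ vs = (b : EReal) :=
    ⟨(φ vs).toReal, (EReal.coe_toReal hvs (hP2.1 vs)).symm⟩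
  have hutop : φ u ≠ ⊤ := by
    have h0 := h vs hvsK
    rw [hb, ← EReal.coe_add] at h0
    exact (h0.trans_lt (EReal.coe_lt_top _)).ne
  obtain ⟨a, ha⟩ : ∃ a : ℝ, φ u = (a : EReal) :=
    ⟨(φ u).toReal, (EReal.coe_toReal hutop (hP2.1 u)).symm⟩
  refine ⟨huK, fun v hv => ?_⟩
  by_cases hvtop : φ v = ⊤
  · rw [hvtop, EReal.coe_add_top]; exact le_top
  obtain ⟨c, hc⟩ : ∃ c : ℝ, φ v = (c : EReal) :=
    ⟨(φ v).toReal, (EReal.coe_toReal hvtop (hP2.1 v)).symm⟩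
  -- key pointwise inequality for t ∈ (0,1]
  have key : ∀ t ∈ Ioc (0:ℝ) 1,
      a ≤ w (v - u) + (G (u + t • (v - u))) (v - u) + c := by
    intro t ht
    obtain ⟨ht0, ht1⟩ := ht
    have hzeq : u + t • (v - u) = t • v + (1 - t) • u := by
      rw [smul_sub, sub_smul, one_smul]; abel
    have hzK : u + t • (v - u) ∈ K := by
      rw [hzeq]
      exact hKcv hv huK ht0.le (by linarith) (by ring)
    have h1 := h _ hzK
    have hzu : u + t • (v - u) - u = t • (v - u) := by abel
    rw [hzu] at h1
    have hconv := hP2.2.2.1 v u t ⟨ht0.le, ht1⟩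
    rw [← hzeq] at hconv
    have h2 : φ u ≤ ((w (t • (v - u)) + (G (u + t • (v - u))) (t • (v - u)) : ℝ) : EReal)
        + ((t : EReal) * φ v + ((1 - t : ℝ) : EReal) * φ u) :=
      h1.trans (add_le_add_right hconv _)
    rw [ha, hc] at h2
    simp only [_root_.map_smul, smul_eq_mul] at h2
    have h3 : a ≤ t * w (v - u) + t * (G (u + t • (v - u))) (v - u) + (t * c + (1 - t) * a) := by
      exact_mod_cast h2
    have h4 : t * a ≤ t * (w (v - u) + (G (u + t • (v - u))) (v - u) + c) := by nlinarith
    exact le_of_mul_le_mul_left h4 ht0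
  -- pass to the limit t → 0⁺
  haveI hNB : (𝓝[Ioc (0:ℝ) 1] 0).NeBot := by
    apply mem_closure_iff_nhdsWithin_neBot.mp
    rw [closure_Ioc (by norm_num : (0:ℝ) ≠ 1)]
    exact ⟨le_refl 0, zero_le_one⟩
  have hcont := hP1.2 u huK v hv (v - u)
  have htend0 : Tendsto (fun t : ℝ => (G (u + t • (v - u))) (v - u)) (𝓝[Ioc (0:ℝ) 1] 0)
      (𝓝 ((G u) (v - u))) := by
    have h0mem : (0:ℝ) ∈ Icc (0:ℝ) 1 := ⟨le_refl 0, zero_le_one⟩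
    have := (hcont 0 h0mem).mono Ioc_subset_Icc_self
    simpa using this.tendsto
  have htend : Tendsto (fun t : ℝ => w (v - u) + (G (u + t • (v - u))) (v - u) + c)
      (𝓝[Ioc (0:ℝ) 1] 0) (𝓝 (w (v - u) + (G u) (v - u) + c)) :=
    (tendsto_const_nhds.add htend0).add tendsto_const_nhds
  have hfin : a ≤ w (v - u) + (G u) (v - u) + c :=
    ge_of_tendsto htend (eventually_nhdsWithin_of_forall key)
  rw [ha, hc]
  exact_mod_cast hfin

/-- Sublevel-type sets of `φ` shifted by a continuous linear functional. -/
def Sset (φ : Ω₁ → EReal) (w' : Ω₁ →L[ℝ] ℝ) (c : ℝ) : Set Ω₁ :=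
  {u | φ u ≤ ((w' u + c : ℝ) : EReal)}

lemma convex_Sset (hP2 : condP2 φ) (w' : Ω₁ →L[ℝ] ℝ) (c : ℝ) : Convex ℝ (Sset φ w' c) := by
  intro x hx y hy s t hs ht hst
  have ht2 : t = 1 - s := by linarith
  subst ht2
  have hxtop : φ x ≠ ⊤ := (hx.trans_lt (EReal.coe_lt_top _)).ne
  have hytop : φ y ≠ ⊤ := (hy.trans_lt (EReal.coe_lt_top _)).ne
  obtain ⟨ax, hax⟩ : ∃ a : ℝ, φ x = (a : EReal) :=
    ⟨(φ x).toReal, (EReal.coe_toReal hxtop (hP2.1 x)).symm⟩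
  obtain ⟨ay, hay⟩ : ∃ a : ℝ, φ y = (a : EReal) :=
    ⟨(φ y).toReal, (EReal.coe_toReal hytop (hP2.1 y)).symm⟩
  have hx2 : φ x ≤ ((w' x + c : ℝ) : EReal) := hx
  have hy2 : φ y ≤ ((w' y + c : ℝ) : EReal) := hy
  rw [hax] at hx2
  rw [hay] at hy2
  have hax' : ax ≤ w' x + c := by exact_mod_cast hx2
  have hay' : ay ≤ w' y + c := by exact_mod_cast hy2
  have hconv := hP2.2.2.1 x y s ⟨hs, by linarith⟩
  rw [hax, hay] at hconv
  have hconv' : φ (s • x + (1 - s) • y) ≤ ((s * ax + (1 - s) * ay : ℝ) : EReal) := by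
    refine hconv.trans_eq ?_
    rw [← EReal.coe_mul, ← EReal.coe_mul, ← EReal.coe_add]
  refine hconv'.trans ?_
  have harith : s * ax + (1 - s) * ay ≤ w' (s • x + (1 - s) • y) + c := by
    rw [map_add, _root_.map_smul, _root_.map_smul, smul_eq_mul, smul_eq_mul]
    nlinarith
  exact_mod_cast harith

lemma isClosed_Sset (hlsc : LowerSemicontinuous φ) (w' : Ω₁ →L[ℝ] ℝ) (c : ℝ) :
    IsClosed (Sset φ w' c) := by
  rw [← isOpen_compl_iff, isOpen_iff_mem_nhds]
  intro x hx
  rw [mem_compl_iff, Sset, mem_setOf_eq, not_le] at hx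
  obtain ⟨y, hy1, hy2⟩ := EReal.exists_between_coe_real hx
  have h1 : ∀ᶠ z in 𝓝 x, (y : EReal) < φ z := hlsc x (y : EReal) hy2
  have hcnt : Continuous fun z : Ω₁ => w' z + c := (w'.continuous).add continuous_const
  have h2 : ∀ᶠ z in 𝓝 x, w' z + c < y :=
    (hcnt.tendsto x).eventually_lt_const (by exact_mod_cast hy1)
  have h3 : ∀ᶠ z in 𝓝 x, z ∈ (Sset φ w' c)ᶜ := by
    filter_upwards [h1, h2] with z hz1 hz2
    rw [mem_compl_iff, Sset, mem_setOf_eq, not_le]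
    exact lt_trans (by exact_mod_cast hz2) hz1
  exact h3

lemma isClosed_image_toWeakSpace {s : Set Ω₁} (hcv : Convex ℝ s) (hcl : IsClosed s) :
    IsClosed ((toWeakSpace ℝ Ω₁) '' s : Set (WeakSpace ℝ Ω₁)) := by
  have h := hcv.toWeakSpace_closure (𝕜 := ℝ)
  rw [hcl.closure_eq] at h
  rw [← closure_eq_iff_isClosed]
  exact h.symm

lemma isCompact_image_toWeakSpace_closedBall
    (hsurj : Function.Surjective ⇑(NormedSpace.inclusionInDoubleDual ℝ Ω₁)) (R : ℝ) :
    IsCompact ((toWeakSpace ℝ Ω₁) '' Metric.closedBall (0:Ω₁) R : Set (WeakSpace ℝ Ω₁)) := by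
  set J := NormedSpace.inclusionInDoubleDual ℝ Ω₁ with hJ
  have hnorm : ∀ x : Ω₁, ‖J x‖ = ‖x‖ := fun x =>
    (NormedSpace.inclusionInDoubleDualLi ℝ (E := Ω₁)).norm_map x
  have hinj : Function.Injective ⇑J := by
    intro x y hxy
    have : ‖J (x - y)‖ = 0 := by rw [map_sub, hxy, sub_self]; exact @norm_zero (StrongDual ℝ (StrongDual ℝ Ω₁)) _
    rw [hnorm] at this
    exact sub_eq_zero.mp (norm_eq_zero.mp this)
  set Jinv := Function.surjInv hsurj with hJinv
  have hJi : ∀ y, J (Jinv y) = y := fun y => Function.surjInv_eq hsurj y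
  have hJi2 : ∀ x, Jinv (J x) = x := fun x => hinj (hJi (J x))
  have hcont : Continuous (fun y : WeakDual ℝ (StrongDual ℝ Ω₁) =>
      (toWeakSpace ℝ Ω₁ (Jinv (WeakDual.toStrongDual y)) : WeakSpace ℝ Ω₁)) := by
    apply WeakBilin.continuous_of_continuous_eval
    intro f
    have heq : (fun y : WeakDual ℝ (StrongDual ℝ Ω₁) =>
        ((topDualPairing ℝ Ω₁).flip (toWeakSpace ℝ Ω₁ (Jinv (WeakDual.toStrongDual y)))) f)
        = fun y => y f := by
      funext y
      show f (Jinv (WeakDual.toStrongDual y)) = y f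
      conv_rhs => rw [show (y : StrongDual ℝ (StrongDual ℝ Ω₁))
        = J (Jinv (WeakDual.toStrongDual y)) from (hJi _).symm]
      rfl
    rw [heq]
    exact WeakDual.eval_continuous f
  have himage : (toWeakSpace ℝ Ω₁) '' Metric.closedBall (0:Ω₁) R =
      (fun y : WeakDual ℝ (StrongDual ℝ Ω₁) =>
        (toWeakSpace ℝ Ω₁ (Jinv (WeakDual.toStrongDual y)) : WeakSpace ℝ Ω₁)) ''
        (WeakDual.toStrongDual ⁻¹' Metric.closedBall 0 R) := by
    ext z
    constructor
    · rintro ⟨x, hx, rfl⟩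
      refine ⟨StrongDual.toWeakDual (J x), ?_, ?_⟩
      · rw [mem_preimage]
        simp only [Metric.mem_closedBall, dist_zero_right] at hx ⊢
        exact (dist_zero_right (J x)).trans_le ((hnorm x).trans_le hx)
      · show toWeakSpace ℝ Ω₁ (Jinv (J x)) = toWeakSpace ℝ Ω₁ x
        rw [hJi2]
    · rintro ⟨y, hy, rfl⟩
      refine ⟨Jinv (WeakDual.toStrongDual y), ?_, rfl⟩
      rw [mem_preimage] at hy
      simp only [Metric.mem_closedBall, dist_zero_right] at hy ⊢
      have : ‖J (Jinv (WeakDual.toStrongDual y))‖ ≤ R := by rw [hJi]; exact (dist_zero_right (WeakDual.toStrongDual y)).symm.trans_le hy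
      rwa [hnorm] at this
  rw [himage]
  exact (WeakDual.isCompact_closedBall (𝕜 := ℝ) (E := StrongDual ℝ Ω₁) 0 R).image hcont

lemma sol_ineq_iff (φ : Ω₁ → EReal) (w Gv : Ω₁ →L[ℝ] ℝ) (v u : Ω₁) (b : ℝ) :
    (φ u ≤ ((w (v - u) + Gv (v - u) + b : ℝ) : EReal))
      ↔ u ∈ Sset φ (-(w + Gv)) (w v + Gv v + b) := by
  have harg : w (v - u) + Gv (v - u) + b = (-(w + Gv)) u + (w v + Gv v + b) := by
    simp only [map_sub, ContinuousLinearMap.add_apply, ContinuousLinearMap.neg_apply]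
    ring
  rw [Sset, mem_setOf_eq, harg]

lemma isClosed_sol (hP1 : condP1 K G) (hP2 : condP2 φ) (hKcl : IsClosed K) (hKcv : Convex ℝ K)
    {vs : Ω₁} (hvsK : vs ∈ K) (hvs : φ vs ≠ ⊤) (w : Ω₁ →L[ℝ] ℝ) :
    IsClosed (SOL K G φ w) := by
  have heq : SOL K G φ w = K ∩ ⋂ v ∈ K,
      {u : Ω₁ | φ u ≤ ((w (v - u) + (G v) (v - u) : ℝ) : EReal) + φ v} := by
    ext u
    constructor
    · intro hu
      exact ⟨hu.1, mem_iInter₂.mpr (minty_fwd hP1.1 hu)⟩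
    · rintro ⟨huK, hmem⟩
      exact minty_bwd hP1 hP2 hKcv hvsK hvs huK (fun v hv => mem_iInter₂.mp hmem v hv)
  rw [heq]
  refine hKcl.inter (isClosed_biInter fun v hv => ?_)
  by_cases hvt : φ v = ⊤
  · have huniv : {u : Ω₁ | φ u ≤ ((w (v - u) + (G v) (v - u) : ℝ) : EReal) + φ v} = univ := by
      ext u; simp only [hvt, mem_setOf_eq, EReal.coe_add_top, le_top, mem_univ]
    rw [huniv]; exact isClosed_univ
  · obtain ⟨b, hb⟩ : ∃ b : ℝ, φ v = (b : EReal) := ⟨_, (EReal.coe_toReal hvt (hP2.1 v)).symm⟩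
    have h2 : {u : Ω₁ | φ u ≤ ((w (v - u) + (G v) (v - u) : ℝ) : EReal) + φ v}
        = Sset φ (-(w + G v)) (w v + (G v) v + b) := by
      ext u
      rw [mem_setOf_eq, hb, ← EReal.coe_add]
      exact sol_ineq_iff φ w (G v) v u b
    rw [h2]
    exact isClosed_Sset hP2.2.2.2 _ _

lemma isClosed_hit (hsurj : Function.Surjective ⇑(NormedSpace.inclusionInDoubleDual ℝ Ω₁))
    (hP1 : condP1 K G) (hP2 : condP2 φ) (hKcl : IsClosed K) (hKcv : Convex ℝ K)
    {vs : Ω₁} (hvsK : vs ∈ K) (hvs : φ vs ≠ ⊤)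
    {w : ℝ → (Ω₁ →L[ℝ] ℝ)} (hw : Continuous w) (x : Ω₁) (r : ℝ) :
    IsClosed {ξ : ℝ | ∃ u, u ∈ SOL K G φ (w ξ) ∧ dist u x ≤ r} := by
  refine IsSeqClosed.isClosed fun ξs ξ0 hmem htend => ?_
  choose us hus hdist using hmem
  set i := toWeakSpace ℝ Ω₁ with hi
  -- the weakly compact container
  have hsub : K ∩ Metric.closedBall x r ⊆ Metric.closedBall (0:Ω₁) (‖x‖ + r) := by
    rintro u ⟨-, hu⟩
    rw [Metric.mem_closedBall, dist_zero_right]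
    rw [Metric.mem_closedBall] at hu
    calc ‖u‖ = ‖u - x + x‖ := by rw [sub_add_cancel]
    _ ≤ ‖u - x‖ + ‖x‖ := norm_add_le _ _
    _ ≤ ‖x‖ + r := by rw [dist_eq_norm] at hu; linarith
  have hcomp : IsCompact (i '' (K ∩ Metric.closedBall x r)) :=
    (isCompact_image_toWeakSpace_closedBall hsurj (‖x‖ + r)).of_isClosed_subset
      (isClosed_image_toWeakSpace (hKcv.inter (convex_closedBall x r))
        (hKcl.inter Metric.isClosed_closedBall))
      (image_mono hsub)
  set L := Filter.map (fun n => i (us n)) atTop with hL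
  haveI : L.NeBot := Filter.map_neBot
  have hLP : L ≤ 𝓟 (i '' (K ∩ Metric.closedBall x r)) := by
    rw [le_principal_iff, hL, Filter.mem_map]
    filter_upwards with n
    exact mem_image_of_mem i ⟨(hus n).1, Metric.mem_closedBall.mpr (hdist n)⟩
  obtain ⟨y, hy, hclus⟩ := hcomp.exists_clusterPt hLP
  obtain ⟨u0, hu0mem, rfl⟩ := hy
  -- key: pass each Minty inequality to the cluster point
  have claim : ∀ v ∈ K, ∀ b : ℝ, φ v = (b : EReal) → ∀ ε : ℝ, 0 < ε →
      φ u0 ≤ ((w ξ0 (v - u0) + (G v) (v - u0) + (b + ε) : ℝ) : EReal) := by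
    intro v hv b hb ε hε
    set S := Sset φ (-(w ξ0 + G v)) (w ξ0 v + (G v) v + (b + ε)) with hS
    have hSweak : IsClosed (i '' S) :=
      isClosed_image_toWeakSpace (convex_Sset hP2 _ _) (isClosed_Sset hP2.2.2.2 _ _)
    -- eventual membership
    have hwc : Tendsto (fun n => ‖w (ξs n) - w ξ0‖) atTop (𝓝 0) := by
      have h1 : Tendsto (fun n => w (ξs n)) atTop (𝓝 (w ξ0)) := (hw.tendsto ξ0).comp htend
      rwa [tendsto_iff_norm_sub_tendsto_zero] at h1
    set M : ℝ := ‖v‖ + ‖x‖ + |r| + 1 with hM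
    have hMpos : 0 < M := by positivity
    have hev : ∀ᶠ n in atTop, ‖w (ξs n) - w ξ0‖ < ε / M :=
      hwc.eventually_lt_const (by positivity)
    have hevS : ∀ᶠ n in atTop, i (us n) ∈ i '' S := by
      filter_upwards [hev] with n hn
      refine mem_image_of_mem i ?_
      rw [hS, ← sol_ineq_iff]
      have hminty := minty_fwd hP1.1 (hus n) v hv
      rw [hb, ← EReal.coe_add] at hminty
      refine hminty.trans ?_
      rw [EReal.coe_le_coe_iff]
      have hnorm1 : ‖v - us n‖ ≤ M := by
        have h2 : ‖us n‖ ≤ ‖x‖ + r := by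
          have := hdist n
          calc ‖us n‖ = ‖us n - x + x‖ := by rw [sub_add_cancel]
          _ ≤ ‖us n - x‖ + ‖x‖ := norm_add_le _ _
          _ ≤ ‖x‖ + r := by rw [dist_eq_norm] at this; linarith
        calc ‖v - us n‖ ≤ ‖v‖ + ‖us n‖ := norm_sub_le _ _
        _ ≤ M := by rw [hM]; have : r ≤ |r| := le_abs_self r; linarith
      have hkey : w (ξs n) (v - us n) ≤ w ξ0 (v - us n) + ε := by
        have h3 : (w (ξs n) - w ξ0) (v - us n) ≤ ‖w (ξs n) - w ξ0‖ * ‖v - us n‖ :=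
          le_trans (le_abs_self _) ((w (ξs n) - w ξ0).le_opNorm (v - us n))
        have h4 : ‖w (ξs n) - w ξ0‖ * ‖v - us n‖ ≤ (ε / M) * M := by
          apply mul_le_mul hn.le hnorm1 (norm_nonneg _) (by positivity)
        rw [div_mul_cancel₀ ε hMpos.ne'] at h4
        have h5 : (w (ξs n) - w ξ0) (v - us n) = w (ξs n) (v - us n) - w ξ0 (v - us n) := rfl
        linarith [h3.trans h4, h5 ▸ (h3.trans h4)]
      linarith
    have hLS : L ≤ 𝓟 (i '' S) := le_principal_iff.mpr hevS
    have hyc : i u0 ∈ closure (i '' S) := mem_closure_iff_clusterPt.mpr (hclus.mono hLS)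
    rw [hSweak.closure_eq] at hyc
    obtain ⟨u', hu'S, hu'eq⟩ := hyc
    have : u' = u0 := (toWeakSpace ℝ Ω₁).injective hu'eq
    subst this
    rw [hS, ← sol_ineq_iff] at hu'S
    exact hu'S
  -- conclude u0 ∈ SOL
  have hu0sol : u0 ∈ SOL K G φ (w ξ0) := by
    refine minty_bwd hP1 hP2 hKcv hvsK hvs hu0mem.1 (fun v hv => ?_)
    by_cases hvt : φ v = ⊤
    · rw [hvt, EReal.coe_add_top]; exact le_top
    obtain ⟨b, hb⟩ : ∃ b : ℝ, φ v = (b : EReal) := ⟨_, (EReal.coe_toReal hvt (hP2.1 v)).symm⟩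
    rw [hb, ← EReal.coe_add]
    apply ereal_le_of_forall_eps
    intro ε hε
    have := claim v hv b hb ε hε
    refine this.trans_eq ?_
    norm_num [add_assoc]
  exact ⟨u0, hu0sol, Metric.mem_closedBall.mp hu0mem.2⟩

lemma sol_norm_bound (hP2 : condP2 φ) (hP3 : condP3 K G φ) (C : ℝ) :
    ∃ B : ℝ, ∀ w : Ω₁ →L[ℝ] ℝ, ‖w‖ ≤ C → ∀ u ∈ SOL K G φ w, ‖u‖ ≤ B := by
  obtain ⟨vs, hvsK, hvs, hco⟩ := hP3
  obtain ⟨R, hR⟩ := hco (C + 1)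
  obtain ⟨b, hb⟩ : ∃ b : ℝ, φ vs = (b : EReal) := ⟨_, (EReal.coe_toReal hvs (hP2.1 vs)).symm⟩
  refine ⟨max R (C * ‖vs‖), fun w hw u hu => ?_⟩
  rcases lt_or_ge ‖u‖ R with hcase | hcase
  · exact hcase.le.trans (le_max_left _ _)
  · have h1 := hu.2 vs hvsK
    rw [hb, ← EReal.coe_add] at h1
    have hutop : φ u ≠ ⊤ := (h1.trans_lt (EReal.coe_lt_top _)).ne
    obtain ⟨a, ha⟩ : ∃ a : ℝ, φ u = (a : EReal) := ⟨_, (EReal.coe_toReal hutop (hP2.1 u)).symm⟩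
    rw [ha] at h1
    have h1' : a ≤ w (vs - u) + (G u) (vs - u) + b := by exact_mod_cast h1
    have h2 := hR u hu.1 hcase
    rw [hb, ha, ← EReal.coe_add, ← EReal.coe_add] at h2
    have h2' : (C + 1) * ‖u‖ + b ≤ (G u) (u - vs) + a := by exact_mod_cast h2
    have hGn : (G u) (u - vs) = -((G u) (vs - u)) := by
      rw [show u - vs = -(vs - u) by abel, map_neg]
    have hq : w (vs - u) ≤ C * (‖vs‖ + ‖u‖) := by
      calc w (vs - u) ≤ |w (vs - u)| := le_abs_self _
      _ ≤ ‖w‖ * ‖vs - u‖ := (w.le_opNorm _)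
      _ ≤ C * (‖vs‖ + ‖u‖) :=
          mul_le_mul hw (norm_sub_le _ _) (norm_nonneg _) ((norm_nonneg w).trans hw)
    have hfin : ‖u‖ ≤ C * ‖vs‖ := by nlinarith [h1', h2', hGn, hq]
    exact hfin.trans (le_max_right _ _)

end Aux

section Selection

/-- Kuratowski–Ryll-Nardzewski-style measurable selection for a closed-valued multifunction
whose "hit sets" of open balls are measurable. -/
lemma measurable_selection {α : Type*} [MeasurableSpace α]
    {Ω : Type*} [MetricSpace Ω] [CompleteSpace Ω] [TopologicalSpace.SeparableSpace Ω] [Nonempty Ω]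
    (F : α → Set Ω) (hne : ∀ a, (F a).Nonempty) (hcl : ∀ a, IsClosed (F a))
    (hmeas : ∀ (x : Ω) (r : ℝ), MeasurableSet {a | ∃ u ∈ F a, dist u x < r}) :
    ∃ l : α → Ω, StronglyMeasurable l ∧ ∀ a, l a ∈ F a := by
  classical
  set D : ℕ → Ω := TopologicalSpace.denseSeq Ω with hDdef
  have hdense : DenseRange D := TopologicalSpace.denseRange_denseSeq Ω
  have hbase : ∀ a, ∃ m, ∃ u ∈ F a, dist u (D m) < 1 := by
    intro a
    obtain ⟨u, hu⟩ := hne a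
    obtain ⟨m, hm⟩ := hdense.exists_dist_lt u one_pos
    exact ⟨m, u, hu, hm⟩
  set Q : ℕ → (α → ℕ) → α → ℕ → Prop := fun n f a m =>
    (∃ u ∈ F a, dist u (D m) < (1/2 : ℝ)^(n+1)) ∧
      dist (D m) (D (f a)) < (1/2 : ℝ)^(n+1) + (1/2 : ℝ)^n with hQdef
  set step : ℕ → (α → ℕ) → α → ℕ :=
    fun n f a => if h : ∃ m, Q n f a m then Nat.find h else 0 with hstepdef
  set N : ℕ → α → ℕ := fun n =>
    Nat.rec (motive := fun _ => α → ℕ) (fun a => Nat.find (hbase a))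
      (fun n prev => step n prev) n with hNdef
  have hfindmeas : ∀ (P : α → ℕ → Prop) (hP : ∀ m, MeasurableSet {a | P a m}) (g : α → ℕ),
      (∀ a m, g a = m ↔ (P a m ∧ ∀ j < m, ¬ P a j)) → Measurable g := by
    intro P hP g hg
    apply measurable_to_countable'
    intro m
    have hpre : g ⁻¹' {m} = {a | P a m} ∩ ⋂ j, ⋂ (_ : j < m), {a | P a j}ᶜ := by
      ext a
      simp only [mem_preimage, mem_singleton_iff, hg a m, mem_inter_iff, mem_setOf_eq,
        mem_iInter, mem_compl_iff]
    rw [hpre]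
    exact (hP m).inter (MeasurableSet.iInter fun j =>
      MeasurableSet.iInter fun _ => (hP j).compl)
  have hQmeas : ∀ n (f : α → ℕ), Measurable f → ∀ m, MeasurableSet {a | Q n f a m} := by
    intro n f hf m
    have hsplit : {a | Q n f a m} = {a | ∃ u ∈ F a, dist u (D m) < (1/2 : ℝ)^(n+1)}
        ∩ (f ⁻¹' {k | dist (D m) (D k) < (1/2 : ℝ)^(n+1) + (1/2 : ℝ)^n}) := rfl
    rw [hsplit]
    exact (hmeas _ _).inter (hf trivial)
  have hstepex : ∀ n (f : α → ℕ),
      (∀ a, ∃ u ∈ F a, dist u (D (f a)) < (1/2 : ℝ)^n) → ∀ a, ∃ m, Q n f a m := by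
    intro n f happrox a
    obtain ⟨u, huF, hud⟩ := happrox a
    obtain ⟨m, hm⟩ := hdense.exists_dist_lt u (by positivity : (0:ℝ) < (1/2 : ℝ)^(n+1))
    refine ⟨m, ⟨u, huF, hm⟩, ?_⟩
    calc dist (D m) (D (f a)) ≤ dist (D m) u + dist u (D (f a)) := dist_triangle _ _ _
    _ < (1/2 : ℝ)^(n+1) + (1/2 : ℝ)^n := by rw [dist_comm] at hm; linarith
  have hinv : ∀ n, Measurable (N n) ∧ ∀ a, ∃ u ∈ F a, dist u (D (N n a)) < (1/2 : ℝ)^n := by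
    intro n
    induction n with
    | zero =>
      constructor
      · exact hfindmeas (fun a m => ∃ u ∈ F a, dist u (D m) < 1) (fun m => hmeas (D m) 1)
          (N 0) (fun a m => Nat.find_eq_iff (hbase a))
      · intro a
        show ∃ u ∈ F a, dist u (D (Nat.find (hbase a))) < (1/2:ℝ)^0
        simpa [pow_zero] using Nat.find_spec (hbase a)
    | succ n ih =>
      obtain ⟨ihm, iha⟩ := ih
      have hex : ∀ a, ∃ m, Q n (N n) a m := hstepex n (N n) iha
      have hNeq : ∀ a, N (n+1) a = Nat.find (hex a) := by
        intro a
        show step n (N n) a = _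
        rw [hstepdef]
        simp only
        rw [dif_pos (hex a)]
      constructor
      · exact hfindmeas (Q n (N n)) (hQmeas n (N n) ihm) (N (n+1))
          (fun a m => by rw [hNeq a]; exact Nat.find_eq_iff (hex a))
      · intro a
        rw [hNeq a]
        exact (Nat.find_spec (hex a)).1
  have hpair : ∀ n a, dist (D (N (n+1) a)) (D (N n a)) < (1/2 : ℝ)^(n+1) + (1/2 : ℝ)^n := by
    intro n a
    have hex : ∀ a, ∃ m, Q n (N n) a m := hstepex n (N n) (hinv n).2
    have hNeq : N (n+1) a = Nat.find (hex a) := by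
      show step n (N n) a = _
      rw [hstepdef]
      simp only
      rw [dif_pos (hex a)]
    rw [hNeq]
    exact (Nat.find_spec (hex a)).2
  have hcauchy : ∀ a, CauchySeq (fun n => D (N n a)) := by
    intro a
    apply cauchySeq_of_le_geometric (r := 1/2) (C := 3) (by norm_num)
    intro n
    have h := hpair n a
    have h2 : (1/2 : ℝ)^(n+1) + (1/2 : ℝ)^n ≤ 3 * (1/2 : ℝ)^n := by
      rw [pow_succ]
      nlinarith [pow_pos (by norm_num : (0:ℝ) < 1/2) n]
    rw [dist_comm] at h
    linarith
  have hlim : ∀ a, ∃ x, Tendsto (fun n => D (N n a)) atTop (𝓝 x) :=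
    fun a => cauchySeq_tendsto_of_complete (hcauchy a)
  choose l hl using hlim
  refine ⟨l, ?_, ?_⟩
  · borelize Ω
    have hSM : ∀ n, StronglyMeasurable (fun a => D (N n a)) := fun n =>
      ((measurable_of_countable D).comp (hinv n).1).stronglyMeasurable
    exact stronglyMeasurable_of_tendsto atTop hSM (tendsto_pi_nhds.mpr hl)
  · intro a
    choose U hUF hUd using fun n => (hinv n).2 a
    have hUtend : Tendsto U atTop (𝓝 (l a)) := by
      rw [tendsto_iff_dist_tendsto_zero]
      apply squeeze_zero (fun n => dist_nonneg)
        (g := fun n => (1/2 : ℝ)^n + dist (D (N n a)) (l a))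
      · intro n
        calc dist (U n) (l a) ≤ dist (U n) (D (N n a)) + dist (D (N n a)) (l a) :=
              dist_triangle _ _ _
        _ ≤ (1/2 : ℝ)^n + dist (D (N n a)) (l a) := by linarith [hUd n]
      · have h1 : Tendsto (fun n : ℕ => (1/2 : ℝ)^n) atTop (𝓝 0) := by
          apply tendsto_pow_atTop_nhds_zero_of_lt_one <;> norm_num
        have h2 : Tendsto (fun n => dist (D (N n a)) (l a)) atTop (𝓝 0) :=
          tendsto_iff_dist_tendsto_zero.mp (hl a)
        simpa using h1.add h2
    exact (hcl a).mem_of_tendsto hUtend (Eventually.of_forall hUF)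

end Selection


/-- `U(·, θ(·))` admits a strongly measurable selection; every such selection is
essentially bounded, hence lies in `L²([0,T],Ω₁)`, so `P_U(θ)` is nonempty. -/
theorem PU_nonempty
    {Ω₁ Ω₂ : Type*} [NormedAddCommGroup Ω₁] [NormedSpace ℝ Ω₁] [CompleteSpace Ω₁]
    [TopologicalSpace.SeparableSpace Ω₁]
    [NormedAddCommGroup Ω₂] [NormedSpace ℝ Ω₂] [CompleteSpace Ω₂]
    [TopologicalSpace.SeparableSpace Ω₂]
    (hΩ₁refl : Function.Surjective ⇑(NormedSpace.inclusionInDoubleDual ℝ Ω₁))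
    (hΩ₂refl : Function.Surjective ⇑(NormedSpace.inclusionInDoubleDual ℝ Ω₂))
    (K : Set Ω₁) (hKne : K.Nonempty) (hKcl : IsClosed K) (hKcv : Convex ℝ K)
    (G : Ω₁ → (Ω₁ →L[ℝ] ℝ)) (φ : Ω₁ → EReal)
    (hP1 : condP1 K G) (hP2 : condP2 φ) (hP3 : condP3 K G φ)
    {T : ℝ} (hT : 0 < T)
    (g : ℝ → Ω₂ → (Ω₁ →L[ℝ] ℝ)) (hP4 : condP4 T g)
    (hSOLne : ∀ w : Ω₁ →L[ℝ] ℝ, (SOL K G φ w).Nonempty) :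
    ∀ θ : C(Icc (0:ℝ) T, Ω₂),
      (∃ l : ℝ → Ω₁, StronglyMeasurable l ∧
        ∀ᵐ ξ ∂(volume.restrict (Icc (0:ℝ) T)), l ξ ∈ SOL K G φ (g ξ (extIcc hT.le θ ξ))) ∧
      (∀ l : ℝ → Ω₁, StronglyMeasurable l →
        (∀ᵐ ξ ∂(volume.restrict (Icc (0:ℝ) T)), l ξ ∈ SOL K G φ (g ξ (extIcc hT.le θ ξ))) →
        (∃ C : ℝ, ∀ᵐ ξ ∂(volume.restrict (Icc (0:ℝ) T)), ‖l ξ‖ ≤ C) ∧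
          MemLp l 2 (volume.restrict (Icc (0:ℝ) T))) ∧
      (PUset K G φ hT.le g θ).Nonempty := by
  intro θ
  classical
  haveI : Nonempty Ω₁ := ⟨0⟩
  obtain ⟨vs, hvsK, hvs, hco⟩ := hP3
  set w : ℝ → (Ω₁ →L[ℝ] ℝ) :=
    fun ξ => g ((projIcc 0 T hT.le ξ : ℝ)) (extIcc hT.le θ ξ) with hwdef
  have hwcont : Continuous w := by
    have hmap : Continuous (fun ξ : ℝ => (((projIcc 0 T hT.le ξ : ℝ)), extIcc hT.le θ ξ)) := by
      apply Continuous.prodMk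
      · exact continuous_subtype_val.comp continuous_projIcc
      · exact (map_continuous θ).comp continuous_projIcc
    exact hP4.1.comp_continuous hmap
      (fun ξ => ⟨Subtype.coe_prop _, mem_univ _⟩)
  obtain ⟨C0, hC0⟩ := hP4.2
  have hwb : ∀ ξ : ℝ, ‖w ξ‖ ≤ C0 := fun ξ => hC0 _ (Subtype.coe_prop _) _
  obtain ⟨B, hB⟩ := sol_norm_bound hP2 ⟨vs, hvsK, hvs, hco⟩ C0
  -- the multifunction
  have hFne : ∀ ξ : ℝ, (SOL K G φ (w ξ)).Nonempty := fun ξ => hSOLne (w ξ)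
  have hFcl : ∀ ξ : ℝ, IsClosed (SOL K G φ (w ξ)) :=
    fun ξ => isClosed_sol hP1 hP2 hKcl hKcv hvsK hvs (w ξ)
  have hFhit : ∀ (x : Ω₁) (r : ℝ),
      MeasurableSet {ξ : ℝ | ∃ u ∈ SOL K G φ (w ξ), dist u x < r} := by
    intro x r
    have hset : {ξ : ℝ | ∃ u ∈ SOL K G φ (w ξ), dist u x < r} =
        ⋃ n : ℕ, {ξ : ℝ | ∃ u, u ∈ SOL K G φ (w ξ) ∧ dist u x ≤ r - 1/((n:ℝ)+1)} := by
      ext ξ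
      simp only [mem_setOf_eq, mem_iUnion]
      constructor
      · rintro ⟨u, huF, hd⟩
        obtain ⟨n, hn⟩ := exists_nat_one_div_lt (sub_pos.mpr hd)
        exact ⟨n, u, huF, by linarith⟩
      · rintro ⟨n, u, huF, hd⟩
        have hpos : (0:ℝ) < 1/((n:ℝ)+1) := by positivity
        exact ⟨u, huF, by linarith⟩
    rw [hset]
    exact MeasurableSet.iUnion fun n =>
      (isClosed_hit hΩ₁refl hP1 hP2 hKcl hKcv hvsK hvs hwcont x (r - 1/((n:ℝ)+1))).measurableSet
  obtain ⟨l, hlSM, hlmem⟩ := measurable_selection (fun ξ : ℝ => SOL K G φ (w ξ)) hFne hFcl hFhit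
  have hael : ∀ᵐ ξ ∂(volume.restrict (Icc (0:ℝ) T)),
      l ξ ∈ SOL K G φ (g ξ (extIcc hT.le θ ξ)) := by
    filter_upwards [ae_restrict_mem measurableSet_Icc] with ξ hξ
    have h2 : w ξ = g ξ (extIcc hT.le θ ξ) := by
      show g ((projIcc 0 T hT.le ξ : ℝ)) (extIcc hT.le θ ξ) = _
      rw [projIcc_of_mem hT.le hξ]
    rw [← h2]
    exact hlmem ξ
  haveI : IsFiniteMeasure (volume.restrict (Icc (0:ℝ) T)) := by
    constructor
    rw [Measure.restrict_apply_univ, Real.volume_Icc]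
    exact ENNReal.ofReal_lt_top
  have main2 : ∀ l' : ℝ → Ω₁, StronglyMeasurable l' →
      (∀ᵐ ξ ∂(volume.restrict (Icc (0:ℝ) T)), l' ξ ∈ SOL K G φ (g ξ (extIcc hT.le θ ξ))) →
      (∃ C : ℝ, ∀ᵐ ξ ∂(volume.restrict (Icc (0:ℝ) T)), ‖l' ξ‖ ≤ C) ∧
        MemLp l' 2 (volume.restrict (Icc (0:ℝ) T)) := by
    intro l' hSM hmem
    have hbd : ∀ᵐ ξ ∂(volume.restrict (Icc (0:ℝ) T)), ‖l' ξ‖ ≤ B := by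
      filter_upwards [hmem, ae_restrict_mem measurableSet_Icc] with ξ h1 h2
      exact hB _ (hC0 ξ h2 _) _ h1
    exact ⟨⟨B, hbd⟩, MemLp.of_bound hSM.aestronglyMeasurable B hbd⟩
  exact ⟨⟨l, hlSM, hael⟩, main2, ⟨l, (main2 l hlSM hael).2, hael⟩⟩
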